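/- Let 0 < m₂ < m₁ < 1 and consider the two-outcome POVM on ℂ² with M₁ = diag(m₁, m₂) and M₂ = 1 − M₁. Then γ({M₁, M₂}) = 1 − (√(m₁m₂) + √((1−m₁)(1−m₂)))². Moreover, the supremum defining γ is attained at the orthonormal pair φ* = (√p*, √(1−p*)), φ⊥* = (√(1−p*), −√p*), where p* = √(m₂(1−m₂)) / (√(m₁(1−m₁)) + √(m₂(1−m₂))). -/
import Mathlib


open scoped Matrix Kronecker ComplexOrder
open Classical

noncomputable section

/-- A density matrix: positive semidefinite with unit trace. -/
def IsDensityMatrix {n : Type*} [Fintype n] (ρ : Matrix n n ℂ) : Prop :=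
  ρ.PosSemidef ∧ ρ.trace = 1

/-- A POVM with `r` outcomes. -/
def IsPOVM {n : Type*} [Fintype n] [DecidableEq n] {r : ℕ}
    (M : Fin r → Matrix n n ℂ) : Prop :=
  (∀ i, (M i).PosSemidef) ∧ ∑ i, M i = 1

/-- The Fisher information of the measurement-outcome distribution. -/
def FisherInfo {n : Type*} [Fintype n] {r : ℕ}
    (ρ ρ' : Matrix n n ℂ) (M : Fin r → Matrix n n ℂ) : ℝ :=
  ∑ i, if (ρ * M i).trace = 0 then 0
    else ((ρ' * M i).trace.re) ^ 2 / ((ρ * M i).trace.re)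

/-- A quantum channel (CPTP map) given by finitely many Kraus operators. -/
def IsQuantumChannel {m n : Type*} [Fintype m] [Fintype n] [DecidableEq m]
    (E : Matrix m m ℂ → Matrix n n ℂ) : Prop :=
  ∃ (κ : ℕ) (K : Fin κ → Matrix n m ℂ),
    (∑ j, (K j)ᴴ * K j = 1) ∧ ∀ σ, E σ = ∑ j, K j * σ * (K j)ᴴ

/-- Quantum preprocessing-optimized Fisher information. -/
def QPFI {m n : Type*} [Fintype m] [Fintype n] [DecidableEq m] {r : ℕ}
    (ρ ρ' : Matrix m m ℂ) (M : Fin r → Matrix n n ℂ) : ℝ :=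
  sSup {x : ℝ | ∃ E : Matrix m m ℂ → Matrix n n ℂ,
    IsQuantumChannel E ∧ x = FisherInfo (E ρ) (E ρ') M}

/-- Quantum unitary-preprocessing-optimized Fisher information. -/
def QUPFI {n : Type*} [Fintype n] [DecidableEq n] {r : ℕ}
    (ρ ρ' : Matrix n n ℂ) (M : Fin r → Matrix n n ℂ) : ℝ :=
  sSup {x : ℝ | ∃ U : Matrix n n ℂ, U ∈ Matrix.unitaryGroup n ℂ ∧
    x = FisherInfo (U * ρ * Uᴴ) (U * ρ' * Uᴴ) M}

/-- Complex inner product, conjugate-linear in the first argument. -/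
def cInner {n : Type*} [Fintype n] (φ ψ : n → ℂ) : ℂ := ∑ k, star (φ k) * ψ k

/-- The functional whose supremum over orthonormal pairs is the normalized QPFI. -/
def gammaSummand {n : Type*} [Fintype n] {r : ℕ}
    (M : Fin r → Matrix n n ℂ) (φ φp : n → ℂ) : ℝ :=
  ∑ i, if cInner φ (M i *ᵥ φ) = 0 then 0
    else ((cInner φ (M i *ᵥ φp)).re) ^ 2 / ((cInner φ (M i *ᵥ φ)).re)

/-- The normalized QPFI of a POVM. -/
def gammaPOVM {n : Type*} [Fintype n] {r : ℕ} (M : Fin r → Matrix n n ℂ) : ℝ :=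
  sSup {x : ℝ | ∃ φ φp : n → ℂ,
    cInner φ φ = 1 ∧ cInner φp φp = 1 ∧ cInner φ φp = 0 ∧ x = gammaSummand M φ φp}

/-- Quantum Fisher information: the Fisher information optimized over all POVMs. -/
def QFI {m : Type*} [Fintype m] [DecidableEq m] (ρ ρ' : Matrix m m ℂ) : ℝ :=
  sSup {x : ℝ | ∃ (κ : ℕ) (T : Fin κ → Matrix m m ℂ), IsPOVM T ∧ x = FisherInfo ρ ρ' T}

/-- Classical Fisher information of a finite probability distribution. -/
def classFisher {r : ℕ} (p p' : Fin r → ℝ) : ℝ :=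
  ∑ i, if p i = 0 then 0 else (p' i) ^ 2 / p i

/-- the normalized QPFI of the binary qubit measurement
`M₁ = diag(m₁, m₂)`, `M₂ = 1 − M₁` (with `0 < m₂ < m₁ < 1`), and its attainment at the
explicit optimal orthonormal pair. -/
private lemma stmt7_alg_sos (m1 m2 al be A B q : ℝ)
    (hal : al^2 = m1*(1-m1)) (hbe : be^2 = m2*(1-m2))
    (hA : A^2 = m1*m2) (hB : B^2 = (1-m1)*(1-m2)) (hAB : A*B = al*be) :
    (1-(A+B)^2) * ((m1*q+m2*(1-q))*((1-m1)*q+(1-m2)*(1-q))) * (al+be)^2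
      - (m1-m2)^2*(q*(1-q))*(al+be)^2
      = (m1-m2)^2*(A+B)^2*((al+be)*q-be)^2 := by
  linear_combination ((0:ℝ) + (-4:ℝ)*m2*be^2 + (4:ℝ)*m2*be^2*q + (-2:ℝ)*m2*al*be + (2:ℝ)*m2*al*be*q + m2^2 + (-2:ℝ)*m2^2*q + (4:ℝ)*m2^2*be^2 + (-4:ℝ)*m2^2*be^2*q + (2:ℝ)*m2^2*al*be + (-4:ℝ)*m2^2*al*be*q + (-1:ℝ)*m2^3 + (2:ℝ)*m2^3*q + (-4:ℝ)*m1*be^2*q + (-2:ℝ)*m1*al*be*q + m1*m2 + (2:ℝ)*m1*m2*q + (4:ℝ)*m1*m2*al*be*q + (-3:ℝ)*m1*m2^2 + (2:ℝ)*m1*m2^2*q + (2:ℝ)*m1*m2^3 + (-4:ℝ)*m1*m2^3*q + (4:ℝ)*m1^2*be^2*q + (-4:ℝ)*m1^2*m2*q + (4:ℝ)*m1^2*m2^2*q) * hal + ((0:ℝ) + (-2:ℝ)*m2*al*be + (2:ℝ)*m2*al*be*q + (-2:ℝ)*m1*al*be*q + (-1:ℝ)*m1*m2 + (2:ℝ)*m1*m2*q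 + (4:ℝ)*m1*m2*al*be + (-4:ℝ)*m1*m2*al*be*q + (-1:ℝ)*m1^2 + (-2:ℝ)*m1^2*q + (-2:ℝ)*m1^2*al*be + (4:ℝ)*m1^2*al*be*q + (3:ℝ)*m1^2*m2 + (-6:ℝ)*m1^2*m2*q + m1^3 + (6:ℝ)*m1^3*q + (-2:ℝ)*m1^3*m2 + (4:ℝ)*m1^3*m2*q + (-4:ℝ)*m1^4*q) * hbe + ((0:ℝ) + (-1:ℝ)*m2*be^2 + m2*be^2*q + (-2:ℝ)*m2*al*be + (2:ℝ)*m2*al*be*q + (-1:ℝ)*m2*al^2 + m2*al^2*q + (2:ℝ)*m2^2*al*be + (-2:ℝ)*m2^2*al*be*q + m2^2*al^2 + (-2:ℝ)*m2^2*al^2*q + (-1:ℝ)*m1*be^2*q + (-2:ℝ)*m1*al*be*q + (-1:ℝ)*m1*al^2*q + (2:ℝ)*m1*m2*be^2 + (-2:ℝ)*m1*m2*be^2*q + (2:ℝ)*m1*m2*al^2*q + (-1:ℝ)*m1^2*be^2 + (2:ℝ)*m1^2*be^2*q + (2:ℝ)*m1^2*al*be*q) * hA + ((0:ℝ) + (-1:ℝ)*m2*be^2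 + m2*be^2*q + (-2:ℝ)*m2*al*be + (2:ℝ)*m2*al*be*q + (-1:ℝ)*m2*al^2 + m2*al^2*q + (2:ℝ)*m2^2*al*be + (-2:ℝ)*m2^2*al*be*q + m2^2*al^2 + (-2:ℝ)*m2^2*al^2*q + (-1:ℝ)*m1*be^2*q + (-2:ℝ)*m1*al*be*q + (-1:ℝ)*m1*al^2*q + (2:ℝ)*m1*m2*be^2 + (-2:ℝ)*m1*m2*be^2*q + (2:ℝ)*m1*m2*al^2*q + (-1:ℝ)*m1^2*be^2 + (2:ℝ)*m1^2*be^2*q + (2:ℝ)*m1^2*al*be*q) * hB + ((0:ℝ) + (-2:ℝ)*m2*be^2 + (2:ℝ)*m2*be^2*q + (-4:ℝ)*m2*al*be + (4:ℝ)*m2*al*be*q + (-2:ℝ)*m2*al^2 + (2:ℝ)*m2*al^2*q + (4:ℝ)*m2^2*al*be + (-4:ℝ)*m2^2*al*be*q + (2:ℝ)*m2^2*al^2 + (-4:ℝ)*m2^2*al^2*q + (-2:ℝ)*m1*be^2*q + (-4:ℝ)*m1*al*be*q + (-2:ℝ)*m1*al^2*q + (4:ℝ)*m1*m2*be^2 +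 (-4:ℝ)*m1*m2*be^2*q + (4:ℝ)*m1*m2*al^2*q + (-2:ℝ)*m1^2*be^2 + (4:ℝ)*m1^2*be^2*q + (4:ℝ)*m1^2*al*be*q) * hAB

private lemma stmt7_alg_att (m1 m2 al be A B p : ℝ)
    (hal : al^2 = m1*(1-m1)) (hbe : be^2 = m2*(1-m2))
    (hA : A^2 = m1*m2) (hB : B^2 = (1-m1)*(1-m2)) (hAB : A*B = al*be)
    (hpe : p*(al+be) = be) :
    ((m1-m2)^2*(p*(1-p)) - (1-(A+B)^2) * ((m1*p+m2*(1-p))*((1-m1)*p+(1-m2)*(1-p))))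
      * (al+be)^2 = 0 := by
  linear_combination ((0:ℝ) + m2*be + (-1:ℝ)*m2*be*B^2 + (-2:ℝ)*m2*be*A*B + (-1:ℝ)*m2*be*A^2 + m2*al + (-1:ℝ)*m2*al*B^2 + (-2:ℝ)*m2*al*A*B + (-1:ℝ)*m2*al*A^2 + (-1:ℝ)*m2^2*be + m2^2*be*B^2 + (-1:ℝ)*m2^2*be*B^2*p + (2:ℝ)*m2^2*be*A*B + (-2:ℝ)*m2^2*be*A*B*p + m2^2*be*A^2 + (-1:ℝ)*m2^2*be*A^2*p + (-1:ℝ)*m2^2*al + (2:ℝ)*m2^2*al*B^2 + (-1:ℝ)*m2^2*al*B^2*p + (4:ℝ)*m2^2*al*A*B + (-2:ℝ)*m2^2*al*A*B*p + (2:ℝ)*m2^2*al*A^2 + (-1:ℝ)*m2^2*al*A^2*p + (-1:ℝ)*m1*be + m1*be*B^2 + (2:ℝ)*m1*be*A*B + m1*be*A^2 + (-1:ℝ)*m1*al + m1*al*B^2 + (2:ℝ)*m1*al*A*B + m1*al*A^2 + (2:ℝ)*m1*m2*be*B^2*p + (4:ℝ)*m1*m2*be*A*B*p + (2:ℝ)*m1*m2*be*A^2*p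 + (-2:ℝ)*m1*m2*al*B^2 + (2:ℝ)*m1*m2*al*B^2*p + (-4:ℝ)*m1*m2*al*A*B + (4:ℝ)*m1*m2*al*A*B*p + (-2:ℝ)*m1*m2*al*A^2 + (2:ℝ)*m1*m2*al*A^2*p + m1^2*be + (-1:ℝ)*m1^2*be*B^2 + (-1:ℝ)*m1^2*be*B^2*p + (-2:ℝ)*m1^2*be*A*B + (-2:ℝ)*m1^2*be*A*B*p + (-1:ℝ)*m1^2*be*A^2 + (-1:ℝ)*m1^2*be*A^2*p + m1^2*al + (-1:ℝ)*m1^2*al*B^2*p + (-2:ℝ)*m1^2*al*A*B*p + (-1:ℝ)*m1^2*al*A^2*p) * hpe + ((0:ℝ) + (2:ℝ)*m2*al*be + (2:ℝ)*m2*al^2 + (-2:ℝ)*m2^2*al^2 + (2:ℝ)*m1*be^2 + (2:ℝ)*m1*al*be + (-4:ℝ)*m1*m2*al*be + (-2:ℝ)*m1^2*be^2) * hAB + ((0:ℝ) + m2*al*be + m2*al^2 + (-1:ℝ)*m2^2*al^2 + m1*be^2 + m1*al*be + (-2:ℝ)*m1*m2*al*be + (-1:ℝ)*m1^2*be^2)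 * hA + ((0:ℝ) + m2*al*be + m2*al^2 + (-1:ℝ)*m2^2*al^2 + m1*be^2 + m1*al*be + (-2:ℝ)*m1*m2*al*be + (-1:ℝ)*m1^2*be^2) * hB + ((0:ℝ) + (2:ℝ)*m2*be^2 + (2:ℝ)*m2*al*be + (-1:ℝ)*m2^2 + (-2:ℝ)*m2^2*al*be + m2^3 + (2:ℝ)*m1*be^2 + (-1:ℝ)*m1*m2 + (-4:ℝ)*m1*m2*be^2 + (3:ℝ)*m1*m2^2 + (-2:ℝ)*m1*m2^3) * hal + ((0:ℝ) + (2:ℝ)*m1*al*be + m1*m2 + m1^2 + (-2:ℝ)*m1^2*al*be + (-3:ℝ)*m1^2*m2 + (-1:ℝ)*m1^3 + (2:ℝ)*m1^3*m2) * hbe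

set_option maxHeartbeats 1000000 in
theorem stmt7 (m₁ m₂ : ℝ) (h₂ : 0 < m₂) (h₁₂ : m₂ < m₁) (h₁ : m₁ < 1)
    (M : Fin 2 → Matrix (Fin 2) (Fin 2) ℂ)
    (hM0 : M 0 = Matrix.diagonal ![(m₁ : ℂ), (m₂ : ℂ)])
    (hM1 : M 1 = 1 - M 0)
    (p : ℝ)
    (hp : p = Real.sqrt (m₂ * (1 - m₂)) /
      (Real.sqrt (m₁ * (1 - m₁)) + Real.sqrt (m₂ * (1 - m₂)))) :
    gammaPOVM M
      = 1 - (Real.sqrt (m₁ * m₂) + Real.sqrt ((1 - m₁) * (1 - m₂))) ^ 2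
    ∧ gammaSummand M
        ![((Real.sqrt p : ℝ) : ℂ), ((Real.sqrt (1 - p) : ℝ) : ℂ)]
        ![((Real.sqrt (1 - p) : ℝ) : ℂ), (-(Real.sqrt p : ℝ) : ℂ)]
      = gammaPOVM M := by
  have hm10 : (0:ℝ) < m₁ := lt_trans h₂ h₁₂
  have hm21 : m₂ < 1 := lt_trans h₁₂ h₁
  set al := Real.sqrt (m₁ * (1 - m₁)) with hal_def
  set be := Real.sqrt (m₂ * (1 - m₂)) with hbe_def
  set A := Real.sqrt (m₁ * m₂) with hA_def
  set B := Real.sqrt ((1 - m₁) * (1 - m₂)) with hB_def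
  have hal2 : al^2 = m₁*(1-m₁) := Real.sq_sqrt (by nlinarith)
  have hbe2 : be^2 = m₂*(1-m₂) := Real.sq_sqrt (by nlinarith)
  have hA2 : A^2 = m₁*m₂ := Real.sq_sqrt (by nlinarith)
  have hB2 : B^2 = (1-m₁)*(1-m₂) := Real.sq_sqrt (by nlinarith)
  have halpos : 0 < al := Real.sqrt_pos.2 (by nlinarith)
  have hbepos : 0 < be := Real.sqrt_pos.2 (by nlinarith)
  have hAB : A*B = al*be := by
    rw [hA_def, hB_def, hal_def, hbe_def, ← Real.sqrt_mul (by nlinarith),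
      ← Real.sqrt_mul (by nlinarith)]
    congr 1; ring
  have hsumne : al + be ≠ 0 := by positivity
  have hpe : p * (al + be) = be := by rw [hp]; field_simp
  have hp0 : 0 < p := by rw [hp]; positivity
  have hp1 : p < 1 := by
    rw [hp, div_lt_one (by positivity)]; linarith
  set sp := Real.sqrt p with hsp_def
  set sq2 := Real.sqrt (1 - p) with hsq_def
  have hsp2 : sp^2 = p := Real.sq_sqrt hp0.le
  have hsq2 : sq2^2 = 1 - p := Real.sq_sqrt (by linarith)
  have hspnn : 0 ≤ sp := Real.sqrt_nonneg _
  have hsqnn : 0 ≤ sq2 := Real.sqrt_nonneg _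
  have hsms : ∀ z : ℂ, star z * z = (Complex.normSq z : ℂ) := fun z => by
    rw [Complex.star_def, mul_comm, Complex.mul_conj]
  have hcI : ∀ φ ψ : Fin 2 → ℂ, cInner φ ψ = star (φ 0) * ψ 0 + star (φ 1) * ψ 1 := by
    intro φ ψ; simp [cInner, Fin.sum_univ_two]
  have hM0e : ∀ φ ψ : Fin 2 → ℂ, cInner φ (M 0 *ᵥ ψ)
      = (m₁:ℂ) * (star (φ 0) * ψ 0) + (m₂:ℂ) * (star (φ 1) * ψ 1) := by
    intro φ ψ; simp [cInner, hM0, Matrix.mulVec_diagonal, Fin.sum_univ_two]; ring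
  have hM1e : ∀ φ ψ : Fin 2 → ℂ, cInner φ (M 1 *ᵥ ψ)
      = cInner φ ψ - cInner φ (M 0 *ᵥ ψ) := by
    intro φ ψ; simp [cInner, hM1, Matrix.sub_mulVec, Matrix.one_mulVec, Fin.sum_univ_two]
    ring
  have normEq : ∀ φ : Fin 2 → ℂ, cInner φ φ = 1 →
      Complex.normSq (φ 0) + Complex.normSq (φ 1) = 1 := by
    intro φ hφ
    rw [hcI, hsms, hsms] at hφ
    exact_mod_cast hφ
  have orthEq : ∀ φ φp : Fin 2 → ℂ, cInner φ φp = 0 →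
      star (φ 1) * φp 1 = -(star (φ 0) * φp 0) := by
    intro φ φp h; rw [hcI] at h; linear_combination h
  have genEval : ∀ φ φp : Fin 2 → ℂ, cInner φ φ = 1 → cInner φ φp = 0 →
      gammaSummand M φ φp
        = ((m₁-m₂) * (star (φ 0) * φp 0).re)^2
            / (m₁ * Complex.normSq (φ 0) + m₂ * Complex.normSq (φ 1))
          + ((m₁-m₂) * (star (φ 0) * φp 0).re)^2
            / (1 - (m₁ * Complex.normSq (φ 0) + m₂ * Complex.normSq (φ 1))) := by
    intro φ φp hφ horth
    have hn := normEq φ hφ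
    have hnx := Complex.normSq_nonneg (φ 0)
    have hny := Complex.normSq_nonneg (φ 1)
    have ha1pos : 0 < m₁ * Complex.normSq (φ 0) + m₂ * Complex.normSq (φ 1) := by nlinarith
    have ha1lt : m₁ * Complex.normSq (φ 0) + m₂ * Complex.normSq (φ 1) < 1 := by nlinarith
    have e0 : cInner φ (M 0 *ᵥ φ)
        = ((m₁ * Complex.normSq (φ 0) + m₂ * Complex.normSq (φ 1) : ℝ) : ℂ) := by
      rw [hM0e, hsms, hsms]; push_cast; ring
    have e1 : cInner φ (M 1 *ᵥ φ)
        = ((1 - (m₁ * Complex.normSq (φ 0) + m₂ * Complex.normSq (φ 1)) : ℝ) : ℂ) := by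
      rw [hM1e, hφ, e0]; push_cast; ring
    have horth2 := orthEq φ φp horth
    have f0 : cInner φ (M 0 *ᵥ φp) = ((m₁ - m₂ : ℝ):ℂ) * (star (φ 0) * φp 0) := by
      rw [hM0e, horth2]; push_cast; ring
    have f1 : cInner φ (M 1 *ᵥ φp) = -(((m₁ - m₂ : ℝ):ℂ) * (star (φ 0) * φp 0)) := by
      rw [hM1e, horth, f0]; ring
    have hne1 : ((m₁ * Complex.normSq (φ 0) + m₂ * Complex.normSq (φ 1) : ℝ) : ℂ) ≠ 0 :=
      Complex.ofReal_ne_zero.2 ha1pos.ne'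
    have hne2 : ((1 - (m₁ * Complex.normSq (φ 0) + m₂ * Complex.normSq (φ 1)) : ℝ) : ℂ) ≠ 0 :=
      Complex.ofReal_ne_zero.2 (by linarith)
    unfold gammaSummand
    rw [Fin.sum_univ_two, e0, e1, f0, f1, if_neg hne1, if_neg hne2]
    simp [Complex.ofReal_re]
  have hub : ∀ x ∈ {x : ℝ | ∃ φ φp : Fin 2 → ℂ,
      cInner φ φ = 1 ∧ cInner φp φp = 1 ∧ cInner φ φp = 0 ∧ x = gammaSummand M φ φp},
      x ≤ 1 - (A + B)^2 := by
    rintro x ⟨φ, φp, hφ, hφp, horth, rfl⟩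
    have hval := genEval φ φp hφ horth
    have hn := normEq φ hφ
    have hnp := normEq φp hφp
    have hq0 := Complex.normSq_nonneg (φ 0)
    have hq0' := Complex.normSq_nonneg (φ 1)
    have hr0 := Complex.normSq_nonneg (φp 0)
    have hr0' := Complex.normSq_nonneg (φp 1)
    have hren : ∀ z : ℂ, (z.re)^2 ≤ Complex.normSq z := fun z => by
      rw [Complex.normSq_apply]; nlinarith [sq_nonneg z.im]
    have hs1 : ((star (φ 0) * φp 0).re)^2 ≤ Complex.normSq (φ 0) * Complex.normSq (φp 0) := by
      have h2 : Complex.normSq (star (φ 0) * φp 0)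
          = Complex.normSq (φ 0) * Complex.normSq (φp 0) := by
        rw [Complex.normSq_mul, Complex.star_def, Complex.normSq_conj]
      linarith [hren (star (φ 0) * φp 0), h2.le]
    have hs2 : ((star (φ 0) * φp 0).re)^2 ≤ Complex.normSq (φ 1) * Complex.normSq (φp 1) := by
      have horth2 := orthEq φ φp horth
      have h3 : star (φ 0) * φp 0 = -(star (φ 1) * φp 1) := by linear_combination horth2
      have h2 : Complex.normSq (star (φ 0) * φp 0)
          = Complex.normSq (φ 1) * Complex.normSq (φp 1) := by
        rw [h3, Complex.normSq_neg, Complex.normSq_mul, Complex.star_def, Complex.normSq_conj]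
      linarith [hren (star (φ 0) * φp 0), h2.le]
    have hsq : ((star (φ 0) * φp 0).re)^2
        ≤ Complex.normSq (φ 0) * (1 - Complex.normSq (φ 0)) := by
      have hny : Complex.normSq (φ 1) = 1 - Complex.normSq (φ 0) := by linarith
      have hnv : Complex.normSq (φp 1) = 1 - Complex.normSq (φp 0) := by linarith
      have e1 := mul_le_mul_of_nonneg_left hs1 hq0'
      have e2 := mul_le_mul_of_nonneg_left hs2 hq0
      rw [hny] at e1
      rw [hny, hnv] at e2
      linarith only [e1, e2]
    have key := stmt7_alg_sos m₁ m₂ al be A B (Complex.normSq (φ 0)) hal2 hbe2 hA2 hB2 hAB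
    have hE0 : 0 ≤ (1-(A+B)^2) * ((m₁*(Complex.normSq (φ 0))+m₂*(1-Complex.normSq (φ 0)))
          *((1-m₁)*(Complex.normSq (φ 0))+(1-m₂)*(1-Complex.normSq (φ 0))))
        - (m₁-m₂)^2*((Complex.normSq (φ 0))*(1-Complex.normSq (φ 0))) := by
      have hpos : (0:ℝ) < (al+be)^2 := by positivity
      have h3 : ((1-(A+B)^2) * ((m₁*(Complex.normSq (φ 0))+m₂*(1-Complex.normSq (φ 0)))
          *((1-m₁)*(Complex.normSq (φ 0))+(1-m₂)*(1-Complex.normSq (φ 0))))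
        - (m₁-m₂)^2*((Complex.normSq (φ 0))*(1-Complex.normSq (φ 0)))) * (al+be)^2
          = (m₁-m₂)^2*(A+B)^2*((al+be)*(Complex.normSq (φ 0))-be)^2 := by
        linear_combination key
      have h4 : 0 ≤ ((1-(A+B)^2) * ((m₁*(Complex.normSq (φ 0))+m₂*(1-Complex.normSq (φ 0)))
          *((1-m₁)*(Complex.normSq (φ 0))+(1-m₂)*(1-Complex.normSq (φ 0))))
        - (m₁-m₂)^2*((Complex.normSq (φ 0))*(1-Complex.normSq (φ 0)))) * (al+be)^2 := by rw [h3]; positivity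
      exact le_of_mul_le_mul_right (by simpa using h4) hpos
    rw [hval, show Complex.normSq (φ 1) = 1 - Complex.normSq (φ 0) from by linarith]
    have ha1pos : 0 < m₁*(Complex.normSq (φ 0)) + m₂*(1-Complex.normSq (φ 0)) := by
      have h5 := mul_le_mul_of_nonneg_right h₁₂.le hq0
      linarith only [h5, h₂]
    have ha2pos : 0 < 1 - (m₁*(Complex.normSq (φ 0)) + m₂*(1-Complex.normSq (φ 0))) := by
      have h8 := mul_le_mul_of_nonneg_left
        (show (1:ℝ)-m₁ ≤ 1-m₂ by linarith only [h₁₂])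
        (show (0:ℝ) ≤ 1-Complex.normSq (φ 0) by linarith only [hn, hq0'])
      linarith only [h8, h₁]
    have hcomb : ((m₁-m₂)*((star (φ 0) * φp 0).re))^2
          /(m₁*(Complex.normSq (φ 0))+m₂*(1-Complex.normSq (φ 0)))
        + ((m₁-m₂)*((star (φ 0) * φp 0).re))^2
          /(1-(m₁*(Complex.normSq (φ 0))+m₂*(1-Complex.normSq (φ 0))))
        = (m₁-m₂)^2*((star (φ 0) * φp 0).re)^2
          / ((m₁*(Complex.normSq (φ 0))+m₂*(1-Complex.normSq (φ 0)))
            * (1-(m₁*(Complex.normSq (φ 0))+m₂*(1-Complex.normSq (φ 0))))) := by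
      field_simp; ring
    rw [hcomb, div_le_iff₀ (by positivity)]
    linarith only [hE0, mul_le_mul_of_nonneg_left hsq (sq_nonneg (m₁-m₂))]
  have c1 : cInner ![(sp:ℂ), (sq2:ℂ)] ![(sp:ℂ), (sq2:ℂ)] = 1 := by
    rw [hcI]
    simp only [Matrix.cons_val_zero, Matrix.cons_val_one, Matrix.head_cons,
      Complex.star_def, Complex.conj_ofReal, ← Complex.ofReal_mul, ← Complex.ofReal_add,
      ← Complex.ofReal_one]
    norm_cast
    linarith only [hsp2, hsq2]
  have c2 : cInner ![(sq2:ℂ), -(sp:ℂ)] ![(sq2:ℂ), -(sp:ℂ)] = 1 := by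
    rw [hcI]
    simp only [Matrix.cons_val_zero, Matrix.cons_val_one, Matrix.head_cons, star_neg,
      Complex.star_def, Complex.conj_ofReal, mul_neg, neg_mul, neg_neg,
      ← Complex.ofReal_mul, ← Complex.ofReal_add, ← Complex.ofReal_one]
    norm_cast
    linarith only [hsp2, hsq2]
  have c3 : cInner ![(sp:ℂ), (sq2:ℂ)] ![(sq2:ℂ), -(sp:ℂ)] = 0 := by
    rw [hcI]
    simp only [Matrix.cons_val_zero, Matrix.cons_val_one, Matrix.head_cons,
      Complex.star_def, Complex.conj_ofReal, mul_neg]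
    ring
  have hvφ := genEval ![(sp:ℂ), (sq2:ℂ)] ![(sq2:ℂ), -(sp:ℂ)] c1 c3
  simp only [Matrix.cons_val_zero, Matrix.cons_val_one, Matrix.head_cons,
    Complex.normSq_ofReal, Complex.star_def, Complex.conj_ofReal,
    ← Complex.ofReal_mul, Complex.ofReal_re] at hvφ
  have hps : sp * sp = p := by rw [← hsp2]; ring
  have hqs : sq2 * sq2 = 1 - p := by rw [← hsq2]; ring
  rw [hps, hqs] at hvφ
  have hatt := stmt7_alg_att m₁ m₂ al be A B p hal2 hbe2 hA2 hB2 hAB hpe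
  have key2 : (m₁-m₂)^2*(p*(1-p))
      = (1-(A+B)^2) * ((m₁*p+m₂*(1-p))*((1-m₁)*p+(1-m₂)*(1-p))) := by
    have h0 : (m₁-m₂)^2*(p*(1-p))
        - (1-(A+B)^2) * ((m₁*p+m₂*(1-p))*((1-m₁)*p+(1-m₂)*(1-p))) = 0 := by
      rcases mul_eq_zero.1 hatt with h | h
      · exact h
      · exact absurd h (by positivity)
    linarith
  have ha1p : 0 < m₁*p+m₂*(1-p) := by
    have h5 := mul_le_mul_of_nonneg_right h₁₂.le hp0.le
    linarith only [h5, h₂]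
  have ha2p : 0 < 1-(m₁*p+m₂*(1-p)) := by
    have h8 := mul_le_mul_of_nonneg_left
      (show (1:ℝ)-m₁ ≤ 1-m₂ by linarith only [h₁₂])
      (show (0:ℝ) ≤ 1-p by linarith only [hp1])
    linarith only [h8, h₁]
  have hss : (sp*sq2)^2 = p*(1-p) := by rw [show (sp*sq2)^2 = sp^2*sq2^2 from by ring, hsp2, hsq2]
  have hvγ : gammaSummand M ![(sp:ℂ), (sq2:ℂ)] ![(sq2:ℂ), -(sp:ℂ)] = 1-(A+B)^2 := by
    rw [hvφ, div_add_div _ _ ha1p.ne' ha2p.ne', div_eq_iff (by positivity)]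
    linear_combination key2 + (m₁-m₂)^2 * hss
  have hmem : 1-(A+B)^2 ∈ {x : ℝ | ∃ φ φp : Fin 2 → ℂ,
      cInner φ φ = 1 ∧ cInner φp φp = 1 ∧ cInner φ φp = 0 ∧ x = gammaSummand M φ φp} :=
    ⟨_, _, c1, c2, c3, hvγ.symm⟩
  have hPOVM : gammaPOVM M = 1-(A+B)^2 := by
    unfold gammaPOVM
    exact le_antisymm (csSup_le ⟨_, hmem⟩ hub) (le_csSup ⟨_, hub⟩ hmem)
  refine ⟨hPOVM, ?_⟩
  rw [hPOVM]
  exact hvγ
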